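/- arXiv:math/0311425 — 4 statements merged into one kernel-verified Lean document; each statement's English description precedes it below -/
import Mathlib

section
/- Let q ≥ 1 and m ≥ 1 be natural numbers, and let 1 ≤ s ≤ m−1. Then Σ_{r=1}^{m} (−1)^{m−r} · C(q+m−r−2, m−r) · C(q, r−s) = δ_{s, m−1}, where δ is the Kronecker delta. -/
open PowerSeries

lemma aux_coeff_pow (q j : ℕ) :
    (PowerSeries.coeff (R := ℤ) j) ((1 - PowerSeries.X) ^ q) = (-1) ^ j * (q.choose j : ℤ) := by
  have : ((1 - PowerSeries.X : ℤ⟦X⟧)) ^ q =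
      ∑ k ∈ Finset.range (q + 1), ((-1 : ℤ) ^ k * (q.choose k : ℤ)) • (PowerSeries.X : ℤ⟦X⟧) ^ k := by
    rw [sub_eq_add_neg, add_comm, add_pow]
    refine Finset.sum_congr rfl fun k _ => ?_
    rw [neg_pow, one_pow, mul_one, zsmul_eq_mul]
    push_cast
    ring
  rw [this, map_sum]
  simp only [map_zsmul, PowerSeries.coeff_X_pow, smul_eq_mul]
  by_cases hj : j ≤ q
  · rw [Finset.sum_eq_single j]
    · simp
    · intro k _ hk; simp [Ne.symm hk]
    · intro h; exact absurd (Finset.mem_range.2 (Nat.lt_succ_of_le hj)) h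
  · rw [Finset.sum_eq_zero, Nat.choose_eq_zero_of_lt (by omega), Nat.cast_zero, mul_zero]
    intro k hk
    have : k ≠ j := by simp at hk; omega
    simp [Ne.symm this]

lemma aux_coeff_inv (q k : ℕ) (hq : 1 ≤ q) :
    (PowerSeries.coeff (R := ℤ) k) ((PowerSeries.invOneSubPow ℤ (q - 1)).val) =
      ((q + k - 2).choose k : ℤ) := by
  rcases Nat.lt_or_ge q 2 with h | h
  · interval_cases q
    rw [show (1 - 1 : ℕ) = 0 from rfl, PowerSeries.invOneSubPow_zero]
    rcases Nat.eq_zero_or_pos k with rfl | hk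
    · simp
    · have : (1 + k - 2).choose k = 0 := Nat.choose_eq_zero_of_lt (by omega)
      rw [this]
      simp [PowerSeries.coeff_one, Nat.pos_iff_ne_zero.1 hk]
  · obtain ⟨d, rfl⟩ : ∃ d, q = d + 2 := ⟨q - 2, by omega⟩
    rw [show d + 2 - 1 = d + 1 from rfl, PowerSeries.invOneSubPow_val_succ_eq_mk_add_choose,
      PowerSeries.coeff_mk]
    rw [show d + 2 + k - 2 = d + k by omega, Nat.choose_symm_add]

lemma aux_key (q : ℕ) (hq : 1 ≤ q) :
    ((1 - PowerSeries.X : ℤ⟦X⟧) ^ q) * (PowerSeries.invOneSubPow ℤ (q - 1)).val =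
      1 - PowerSeries.X := by
  obtain ⟨d, rfl⟩ : ∃ d, q = d + 1 := ⟨q - 1, by omega⟩
  rw [show d + 1 - 1 = d from rfl, pow_succ, mul_right_comm,
    ← PowerSeries.invOneSubPow_inv_eq_one_sub_pow,
    (PowerSeries.invOneSubPow ℤ d).inv_val, one_mul]

/-- For natural numbers `q ≥ 1`, `m ≥ 1`, and `1 ≤ s ≤ m - 1`, one has
`∑_{r=1}^{m} (-1)^{m-r} C(q+m-r-2, m-r) C(q, r-s) = δ_{s, m-1}`,
where `C(a, b)` is the usual binomial coefficient (zero if `b > a`, and the term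
`C(q, r - s)` is understood to be zero when `r < s`). -/
theorem alternating_binomial_sum_eq_delta (q m s : ℕ) (hq : 1 ≤ q) (hm : 1 ≤ m)
    (hs : 1 ≤ s) (hsm : s ≤ m - 1) :
    ∑ r ∈ Finset.Icc 1 m,
        (-1 : ℤ) ^ (m - r) * ((q + m - r - 2).choose (m - r) : ℤ) *
          (if s ≤ r then (q.choose (r - s) : ℤ) else 0) =
      (if s = m - 1 then 1 else 0) := by
  set n := m - s with hn
  have hm2 : 2 ≤ m := by omega
  have hn1 : 1 ≤ n := by omega
  have h1 : ∑ r ∈ Finset.Icc 1 m,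
        (-1 : ℤ) ^ (m - r) * ((q + m - r - 2).choose (m - r) : ℤ) *
          (if s ≤ r then (q.choose (r - s) : ℤ) else 0) =
      ∑ r ∈ Finset.Icc s m,
        (-1 : ℤ) ^ (m - r) * ((q + m - r - 2).choose (m - r) : ℤ) * (q.choose (r - s) : ℤ) := by
    rw [← Finset.sum_subset (Finset.Icc_subset_Icc hs le_rfl)
      (fun x hx hxn => by
        rw [if_neg, mul_zero]
        simp only [Finset.mem_Icc] at hx hxn
        omega)]
    exact Finset.sum_congr rfl fun r hr => by
      rw [if_pos (Finset.mem_Icc.1 hr).1]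
  have h2 : ∑ r ∈ Finset.Icc s m,
        (-1 : ℤ) ^ (m - r) * ((q + m - r - 2).choose (m - r) : ℤ) * (q.choose (r - s) : ℤ) =
      ∑ p ∈ Finset.HasAntidiagonal.antidiagonal n,
        (-1 : ℤ) ^ n * (((-1 : ℤ) ^ p.1 * (q.choose p.1 : ℤ)) *
          ((q + p.2 - 2).choose p.2 : ℤ)) := by
    refine Finset.sum_nbij' (i := fun r => (r - s, m - r)) (j := fun p => p.1 + s)
      ?_ ?_ ?_ ?_ ?_
    · intro r hr
      simp only [Finset.mem_Icc] at hr
      simp only [Finset.HasAntidiagonal.mem_antidiagonal]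
      omega
    · intro p hp
      simp only [Finset.HasAntidiagonal.mem_antidiagonal] at hp
      simp only [Finset.mem_Icc]
      omega
    · intro r hr
      simp only [Finset.mem_Icc] at hr
      dsimp only
      omega
    · intro p hp
      simp only [Finset.HasAntidiagonal.mem_antidiagonal] at hp
      ext <;> simp <;> omega
    · intro r hr
      simp only [Finset.mem_Icc] at hr
      have hsign : (-1 : ℤ) ^ n = (-1) ^ (m - r) * (-1) ^ (r - s) := by
        rw [← pow_add]
        congr 1
        omega
      have harg : q + m - r - 2 = q + (m - r) - 2 := by omega
      have hsq : ((-1 : ℤ)) ^ ((r - s) * 2) = 1 := by rcases neg_one_pow_eq_or ℤ (r - s) with h | h <;> rw [pow_mul, h] <;> norm_num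
      rw [hsign, harg]
      ring_nf
      rw [hsq, mul_one]
  have h3 : ∑ p ∈ Finset.HasAntidiagonal.antidiagonal n,
        (((-1 : ℤ) ^ p.1 * (q.choose p.1 : ℤ)) * ((q + p.2 - 2).choose p.2 : ℤ)) =
      PowerSeries.coeff (R := ℤ) n (1 - PowerSeries.X) := by
    rw [← aux_key q hq, PowerSeries.coeff_mul]
    exact Finset.sum_congr rfl fun p _ => by rw [aux_coeff_pow, aux_coeff_inv q p.2 hq]
  have h4 : PowerSeries.coeff (R := ℤ) n (1 - PowerSeries.X) = -(if n = 1 then 1 else 0) := by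
    rw [map_sub, PowerSeries.coeff_one, PowerSeries.coeff_X]
    have : n ≠ 0 := by omega
    simp [this]
  rw [h1, h2, ← Finset.mul_sum, h3, h4]
  by_cases h : s = m - 1
  · have : n = 1 := by omega
    simp [h, this]
  · have : n ≠ 1 := by omega
    simp [h, this]
end

section
/- Let A ∈ SL(n, ℤ). Then for every 0 ≤ r ≤ n, the rank of the kernel of ∧^r A − id equals the rank of the kernel of ∧^{n−r} A − id, as endomorphisms of Λ^r ℤ^n and Λ^{n−r} ℤ^n respectively. -/
set_option maxHeartbeats 1000000


open ExteriorAlgebra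

open ExteriorAlgebra

theorem submodule_pow_mono {R A : Type*} [CommSemiring R] [Semiring A] [Algebra R A]
    {M N : Submodule R A} (h : M ≤ N) : ∀ r : ℕ, M ^ r ≤ N ^ r
  | 0 => le_rfl
  | r + 1 => by
      rw [pow_succ, pow_succ]
      exact mul_le_mul' (submodule_pow_mono h r) h

theorem map_exteriorPower_le {R M : Type*} [CommRing R] [AddCommGroup M] [Module R M]
    (f : M →ₗ[R] M) (r : ℕ) :
    Submodule.map (ExteriorAlgebra.map f).toLinearMap (⋀[R]^r M) ≤ ⋀[R]^r M := by
  have h1 : Submodule.map (ExteriorAlgebra.map f).toLinearMap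
      (LinearMap.range (ι R (M := M))) ≤ LinearMap.range (ι R (M := M)) := by
    rw [ι_range_map_map]
    exact LinearMap.map_le_range
  calc Submodule.map (ExteriorAlgebra.map f).toLinearMap
        (LinearMap.range (ι R (M := M)) ^ r)
      = Submodule.map (ExteriorAlgebra.map f).toLinearMap
          (LinearMap.range (ι R (M := M))) ^ r := Submodule.map_pow _ _ _
    _ ≤ LinearMap.range (ι R (M := M)) ^ r := submodule_pow_mono h1 r

/-- The `r`-th exterior power `∧^r f` of an endomorphism `f`, acting on the `r`-th
exterior power of the module (as a submodule of the exterior algebra). -/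
noncomputable def extPow {R M : Type*} [CommRing R] [AddCommGroup M] [Module R M]
    (f : M →ₗ[R] M) (r : ℕ) : Module.End R (⋀[R]^r M) :=
  (ExteriorAlgebra.map f).toLinearMap.restrict
    (fun _ hx => map_exteriorPower_le f r (Submodule.mem_map_of_mem hx))


open Matrix

namespace ExtAux


variable {n : ℕ}

/-- standard basis vector -/
noncomputable def e (n : ℕ) (i : Fin n) : Fin n → ℤ := Pi.single i 1

/-- the increasing enumeration of a finset of card q -/
noncomputable def σ {q : ℕ} (s : {s : Finset (Fin n) // s.card = q}) : Fin q → Fin n :=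
  fun j => (s.1.orderIsoOfFin s.2 j : Fin n)

lemma σ_mem {q : ℕ} (s : {s : Finset (Fin n) // s.card = q}) (j : Fin q) : σ s j ∈ s.1 :=
  (s.1.orderIsoOfFin s.2 j).2

lemma σ_injective {q : ℕ} (s : {s : Finset (Fin n) // s.card = q}) :
    Function.Injective (σ s) := fun a b h => by
  have := (s.1.orderIsoOfFin s.2).injective (Subtype.ext h)
  exact this

-- det lemmas
lemma detA {q : ℕ} (π : Fin q → Fin n) (κ : Fin q → Fin n) (hπ : ¬ Function.Injective π) :
    Matrix.det (Matrix.of fun j k => (e n (π j)) (κ k)) = 0 := by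
  simp only [Function.Injective, not_forall] at hπ
  obtain ⟨a, b, hab, hne⟩ := hπ
  refine Matrix.det_zero_of_row_eq hne ?_
  funext k
  show e n (π a) (κ k) = e n (π b) (κ k)
  rw [hab]

lemma detB {q : ℕ} (π : Fin q → Fin n) (κ : Fin q → Fin n) (j : Fin q)
    (h : ∀ k, π j ≠ κ k) :
    Matrix.det (Matrix.of fun j k => (e n (π j)) (κ k)) = 0 := by
  refine Matrix.det_eq_zero_of_row_eq_zero j ?_
  intro k
  simp [e, Pi.single_apply, (h k).symm]

lemma detC (π : Fin n → Fin n) (hπ : Function.Injective π) :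
    Matrix.det (Matrix.of fun j k => (e n (π j)) k) *
      Matrix.det (Matrix.of fun j k => (e n (π j)) k) = 1 := by
  set M : Matrix (Fin n) (Fin n) ℤ := Matrix.of fun j k => (e n (π j)) k with hM
  have key : M * Mᵀ = 1 := by
    ext a b
    simp only [Matrix.mul_apply, Matrix.transpose_apply, hM, Matrix.of_apply, e,
      Pi.single_apply, ite_mul, one_mul, zero_mul]
    rw [Finset.sum_ite_eq' Finset.univ (π a) (fun k => if k = π b then (1:ℤ) else 0)]
    simp [Matrix.one_apply, hπ.eq_iff, eq_comm]
  have := congrArg Matrix.det key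
  rwa [Matrix.det_mul, Matrix.det_transpose, Matrix.det_one] at this

lemma detD {q : ℕ} (s : {s : Finset (Fin n) // s.card = q}) :
    Matrix.det (Matrix.of fun j k => (e n (σ s j)) (σ s k)) = 1 := by
  have : (Matrix.of fun j k => (e n (σ s j)) (σ s k)) = (1 : Matrix (Fin q) (Fin q) ℤ) := by
    ext a b
    simp [e, Pi.single_apply, Matrix.one_apply, (σ_injective s).eq_iff, eq_comm]
  rw [this, Matrix.det_one]

/-- the "minor on columns T" alternating form -/
noncomputable def dT {q : ℕ} (s : {s : Finset (Fin n) // s.card = q}) :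
    (Fin n → ℤ) [⋀^Fin q]→ₗ[ℤ] ℤ :=
  (Matrix.detRowAlternating (n := Fin q) (R := ℤ)).compLinearMap
    (LinearMap.pi (fun k => LinearMap.proj (σ s k)))

lemma dT_apply {q : ℕ} (s : {s : Finset (Fin n) // s.card = q}) (v : Fin q → (Fin n → ℤ)) :
    dT s v = Matrix.det (Matrix.of fun j k => v j (σ s k)) := rfl

/-- the degree-q functional attached to a q-subset -/
noncomputable def φT {q : ℕ} (s : {s : Finset (Fin n) // s.card = q}) :
    ExteriorAlgebra ℤ (Fin n → ℤ) →ₗ[ℤ] ℤ :=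
  liftAlternating (Function.update (fun i => (0 : (Fin n → ℤ) [⋀^Fin i]→ₗ[ℤ] ℤ)) q (dT s))

lemma φT_ιMulti_self {q : ℕ} (s : {s : Finset (Fin n) // s.card = q})
    (v : Fin q → (Fin n → ℤ)) : φT s (ιMulti ℤ q v) = dT s v := by
  rw [φT, liftAlternating_apply_ιMulti, Function.update_self]

lemma φT_ιMulti_ne {q i : ℕ} (h : i ≠ q) (s : {s : Finset (Fin n) // s.card = q})
    (v : Fin i → (Fin n → ℤ)) : φT s (ιMulti ℤ i v) = 0 := by
  rw [φT, liftAlternating_apply_ιMulti, Function.update_of_ne h]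
  rfl

/-- the wedge-monomial attached to a subset -/
noncomputable def esF {q : ℕ} (s : {s : Finset (Fin n) // s.card = q}) :
    ExteriorAlgebra ℤ (Fin n → ℤ) :=
  ιMulti ℤ q (fun j => e n (σ s j))

lemma dT_esF_self {q : ℕ} (s : {s : Finset (Fin n) // s.card = q}) :
    dT s (fun j => e n (σ s j)) = 1 := by
  rw [dT_apply]; exact detD s

lemma dT_esF_ne {q : ℕ} (s t : {s : Finset (Fin n) // s.card = q}) (hst : s ≠ t) :
    dT t (fun j => e n (σ s j)) = 0 := by
  rw [dT_apply]
  have h : ¬ s.1 ⊆ t.1 := by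
    intro hsub
    exact hst (Subtype.ext (Finset.eq_of_subset_of_card_le hsub (le_of_eq (t.2.trans s.2.symm))))
  obtain ⟨a, haS, haT⟩ := Finset.not_subset.mp h
  have himg : Finset.image (σ s) Finset.univ = s.1 := by
    apply Finset.eq_of_subset_of_card_le
    · intro x hx
      obtain ⟨j, _, rfl⟩ := Finset.mem_image.mp hx
      exact σ_mem s j
    · rw [Finset.card_image_of_injective _ (σ_injective s), Finset.card_univ,
        Fintype.card_fin, s.2]
  obtain ⟨j, _, hj⟩ := Finset.mem_image.mp (himg ▸ haS)
  exact detB (π := σ s) (κ := σ t) j (fun k h => haT (hj ▸ h ▸ σ_mem t k))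

lemma φT_esF {q : ℕ} (s t : {s : Finset (Fin n) // s.card = q}) :
    φT t (esF s) = if s = t then 1 else 0 := by
  rw [esF, φT_ιMulti_self]
  split_ifs with h
  · subst h; exact dT_esF_self s
  · exact dT_esF_ne s t h


lemma esF_mem {q : ℕ} (s : {s : Finset (Fin n) // s.card = q}) :
    esF s ∈ ⋀[ℤ]^q (Fin n → ℤ) :=
  ιMulti_range ℤ q ⟨_, rfl⟩

lemma ιMulti_eF_mem_span {q : ℕ} (g : Fin q → Fin n) :
    ιMulti ℤ q (fun j => e n (g j)) ∈
      Submodule.span ℤ (Set.range (esF (n := n) (q := q))) := by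
  by_cases hg : Function.Injective g
  · set S : {s : Finset (Fin n) // s.card = q} :=
      ⟨Finset.image g Finset.univ, by
        rw [Finset.card_image_of_injective _ hg, Finset.card_univ, Fintype.card_fin]⟩ with hS
    have hmem : ∀ j, g j ∈ S.1 := fun j => Finset.mem_image_of_mem g (Finset.mem_univ j)
    set τ0 : Fin q → Fin q := fun j => (S.1.orderIsoOfFin S.2).symm ⟨g j, hmem j⟩ with hτ0
    have hτinj : Function.Injective τ0 := by
      intro a b hab
      apply hg
      have h2 : (⟨g a, hmem a⟩ : {x // x ∈ S.1}) = ⟨g b, hmem b⟩ :=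
        (S.1.orderIsoOfFin S.2).symm.injective hab
      exact congrArg Subtype.val h2
    have hτbij := Finite.injective_iff_bijective.mp hτinj
    set τ : Equiv.Perm (Fin q) := Equiv.ofBijective τ0 hτbij with hτ
    have hcomp : (fun j => e n (g j)) = (fun j => e n (σ S j)) ∘ ⇑τ := by
      funext j
      have : σ S (τ0 j) = g j := by
        simp only [σ, hτ0, OrderIso.apply_symm_apply]
      simp [hτ, Equiv.ofBijective_apply, this, Function.comp]
    rw [hcomp, AlternatingMap.map_perm]
    refine Submodule.smul_of_tower_mem _ _ ?_
    exact Submodule.subset_span ⟨S, rfl⟩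
  · simp only [Function.Injective, not_forall] at hg
    obtain ⟨a, b, hab, hne⟩ := hg
    rw [AlternatingMap.map_eq_zero_of_eq (ιMulti ℤ q) _ (show e n (g a) = e n (g b) by
      rw [hab]) hne]
    exact Submodule.zero_mem _

lemma span_esF (q : ℕ) :
    Submodule.span ℤ (Set.range (esF (n := n) (q := q))) = ⋀[ℤ]^q (Fin n → ℤ) := by
  refine le_antisymm (Submodule.span_le.mpr ?_) ?_
  · rintro x ⟨s, rfl⟩
    exact esF_mem s
  · rw [← ιMulti_span_fixedDegree]
    refine Submodule.span_le.mpr ?_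
    rintro x ⟨v, rfl⟩
    have hv : v = fun j => ∑ i, (v j i) • e n i := by
      funext j
      have h1 : ∀ i, v j i • e n i = Pi.single i (v j i) := fun i => by
        rw [e, ← Pi.single_smul, smul_eq_mul, mul_one]
      simp_rw [h1, Finset.univ_sum_single]
    have hexp := MultilinearMap.map_sum
      (ιMulti ℤ q (M := Fin n → ℤ)).toMultilinearMap (g := fun j i => (v j i) • e n i)
    simp only [MultilinearMap.map_smul_univ] at hexp
    simp only [← hv] at hexp
    have hexp' : ιMulti ℤ q v =
        ∑ g : Fin q → Fin n, (∏ j, v j (g j)) • ιMulti ℤ q (fun j => e n (g j)) := hexp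
    rw [hexp']
    exact Submodule.sum_mem _ fun g _ =>
      Submodule.smul_mem _ _ (ιMulti_eF_mem_span g)

/-- basis elements inside the exterior power -/
noncomputable def esE {q : ℕ} (s : {s : Finset (Fin n) // s.card = q}) :
    (⋀[ℤ]^q (Fin n → ℤ) : Submodule ℤ (ExteriorAlgebra ℤ (Fin n → ℤ))) :=
  ⟨esF s, esF_mem s⟩

lemma esF_linearIndependent (q : ℕ) :
    LinearIndependent ℤ (esF (n := n) (q := q)) := by
  rw [Fintype.linearIndependent_iff]
  intro c hc t
  have h0 := congrArg (φT t) hc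
  rw [map_sum, map_zero] at h0
  simp only [_root_.map_smul, φT_esF, smul_eq_mul, mul_ite, mul_one, mul_zero] at h0
  rwa [Finset.sum_ite_eq' Finset.univ t c, if_pos (Finset.mem_univ t)] at h0

lemma esE_linearIndependent (q : ℕ) :
    LinearIndependent ℤ (esE (n := n) (q := q)) := by
  apply LinearIndependent.of_comp (Submodule.subtype _)
  exact esF_linearIndependent q

lemma esE_span_top (q : ℕ) :
    ⊤ ≤ Submodule.span ℤ (Set.range (esE (n := n) (q := q))) := by
  rintro ⟨x, hx⟩ -
  rw [← span_esF q] at hx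
  rw [Submodule.mem_span_range_iff_exists_fun ℤ] at hx ⊢
  obtain ⟨c, hc⟩ := hx
  exact ⟨c, Subtype.ext (by push_cast [esE]; exact hc)⟩

/-- The basis of the `q`-th exterior power of `ℤ^n` indexed by `q`-subsets. -/
noncomputable def bE (n q : ℕ) :
    Module.Basis {s : Finset (Fin n) // s.card = q} ℤ (⋀[ℤ]^q (Fin n → ℤ)) :=
  Module.Basis.mk (esE_linearIndependent q) (esE_span_top q)

lemma bE_apply (q : ℕ) (s : {s : Finset (Fin n) // s.card = q}) :
    bE n q s = esE s := Module.Basis.mk_apply _ _ _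

/-! ### Part 2: the top-degree functional and the wedge pairing -/

/-- top-degree determinant functional -/
noncomputable def dtop (n : ℕ) : (Fin n → ℤ) [⋀^Fin n]→ₗ[ℤ] ℤ :=
  Matrix.detRowAlternating

lemma dtop_apply (v : Fin n → (Fin n → ℤ)) : dtop n v = Matrix.det (Matrix.of v) := rfl

/-- top-degree functional on the exterior algebra -/
noncomputable def φtop (n : ℕ) : ExteriorAlgebra ℤ (Fin n → ℤ) →ₗ[ℤ] ℤ :=
  liftAlternating (Function.update (fun i => (0 : (Fin n → ℤ) [⋀^Fin i]→ₗ[ℤ] ℤ)) n (dtop n))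

lemma φtop_ιMulti_self (v : Fin n → (Fin n → ℤ)) :
    φtop n (ιMulti ℤ n v) = dtop n v := by
  rw [φtop, liftAlternating_apply_ιMulti, Function.update_self]

lemma φtop_ιMulti_ne {i : ℕ} (h : i ≠ n) (v : Fin i → (Fin n → ℤ)) :
    φtop n (ιMulti ℤ i v) = 0 := by
  rw [φtop, liftAlternating_apply_ιMulti, Function.update_of_ne h]
  rfl

lemma φtop_ιMulti_cast {i : ℕ} (hi : i = n) (w : Fin i → (Fin n → ℤ)) :
    φtop n (ιMulti ℤ i w) = dtop n (fun j => w (Fin.cast hi.symm j)) := by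
  subst hi
  rw [φtop_ιMulti_self]
  congr 1

lemma ιMulti_mul {a b : ℕ} (u : Fin a → (Fin n → ℤ)) (v : Fin b → (Fin n → ℤ)) :
    ιMulti ℤ a u * ιMulti ℤ b v = ιMulti ℤ (a + b) (Fin.append u v) := by
  rw [ιMulti_apply, ιMulti_apply, ιMulti_apply, List.ofFn_add, List.prod_append]
  congr 1
  · simp only [Fin.append_left']
  · simp only [Fin.append_right]

lemma dtop_comp_toLin' (B : Matrix (Fin n) (Fin n) ℤ) (v : Fin n → (Fin n → ℤ)) :
    dtop n (fun j => Matrix.toLin' B (v j)) = B.det * dtop n v := by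
  have key : Matrix.of (fun j => Matrix.toLin' B (v j)) = Matrix.of v * Bᵀ := by
    ext j k
    simp [Matrix.toLin'_apply, Matrix.mulVec, Matrix.mul_apply, dotProduct, mul_comm]
  rw [dtop_apply, dtop_apply, key, Matrix.det_mul, Matrix.det_transpose, mul_comm]

lemma φtop_map (B : Matrix (Fin n) (Fin n) ℤ) (x : ExteriorAlgebra ℤ (Fin n → ℤ)) :
    φtop n (ExteriorAlgebra.map (Matrix.toLin' B) x) = B.det * φtop n x := by
  have h : φtop n ∘ₗ (ExteriorAlgebra.map (Matrix.toLin' B)).toLinearMap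
      = B.det • φtop n := by
    refine ExteriorAlgebra.lhom_ext fun i => AlternatingMap.ext fun v => ?_
    simp only [LinearMap.compAlternatingMap_apply, LinearMap.comp_apply, AlgHom.toLinearMap_apply,
      map_apply_ιMulti, LinearMap.smul_apply, smul_eq_mul]
    rcases eq_or_ne i n with rfl | hne
    · rw [φtop_ιMulti_self, φtop_ιMulti_self]
      exact dtop_comp_toLin' B v
    · rw [φtop_ιMulti_ne hne, φtop_ιMulti_ne hne, mul_zero]
  have := LinearMap.congr_fun h x
  simpa using this

/-- the wedge pairing between complementary exterior powers, valued in ℤ via `φtop` -/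
noncomputable def Pair (n a b : ℕ) :
    (⋀[ℤ]^a (Fin n → ℤ)) →ₗ[ℤ] (⋀[ℤ]^b (Fin n → ℤ)) →ₗ[ℤ] ℤ :=
  ((((LinearMap.mul ℤ (ExteriorAlgebra ℤ (Fin n → ℤ))).compr₂ (φtop n)) ∘ₗ
    (Submodule.subtype _)).compl₂ (Submodule.subtype _))

lemma Pair_apply {a b : ℕ} (x : ⋀[ℤ]^a (Fin n → ℤ)) (y : ⋀[ℤ]^b (Fin n → ℤ)) :
    Pair n a b x y = φtop n ((x : ExteriorAlgebra ℤ (Fin n → ℤ)) * y) := rfl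

lemma append_e {a b : ℕ} (s : {s : Finset (Fin n) // s.card = a})
    (t : {s : Finset (Fin n) // s.card = b}) :
    Fin.append (fun j => e n (σ s j)) (fun j => e n (σ t j))
      = fun j => e n (Fin.append (σ s) (σ t) j) := by
  funext j
  refine Fin.addCases (motive := fun j => Fin.append (fun j => e n (σ s j))
    (fun j => e n (σ t j)) j = e n (Fin.append (σ s) (σ t) j)) (fun i => ?_) (fun i => ?_) j
  · simp only [Fin.append_left]
  · simp only [Fin.append_right]

lemma esF_mul {a b : ℕ} (s : {s : Finset (Fin n) // s.card = a})
    (t : {s : Finset (Fin n) // s.card = b}) :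
    esF s * esF t = ιMulti ℤ (a + b) (fun j => e n (Fin.append (σ s) (σ t) j)) := by
  rw [esF, esF, ιMulti_mul, append_e]

lemma pair_esE_zero {a b : ℕ} (hab : a + b = n) (s : {s : Finset (Fin n) // s.card = a})
    (t : {s : Finset (Fin n) // s.card = b}) (hnd : ¬ Disjoint s.1 t.1) :
    φtop n (esF s * esF t) = 0 := by
  rw [esF_mul, φtop_ιMulti_cast hab]
  rw [Finset.not_disjoint_iff] at hnd
  obtain ⟨x, hxs, hxt⟩ := hnd
  set is : Fin a := (s.1.orderIsoOfFin s.2).symm ⟨x, hxs⟩ with his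
  set it : Fin b := (t.1.orderIsoOfFin t.2).symm ⟨x, hxt⟩ with hit
  have hs : σ s is = x := by
    rw [σ, his, OrderIso.apply_symm_apply]
  have ht : σ t it = x := by
    rw [σ, hit, OrderIso.apply_symm_apply]
  set π : Fin n → Fin n := fun j => Fin.append (σ s) (σ t) (Fin.cast hab.symm j) with hπ
  have hninj : ¬ Function.Injective π := by
    intro hinj
    have h1 : π (Fin.cast hab (Fin.castAdd b is)) = x := by
      show Fin.append (σ s) (σ t) (Fin.cast hab.symm (Fin.cast hab (Fin.castAdd b is))) = x
      rw [show Fin.cast hab.symm (Fin.cast hab (Fin.castAdd b is)) = Fin.castAdd b is from rfl,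
        Fin.append_left, hs]
    have h2 : π (Fin.cast hab (Fin.natAdd a it)) = x := by
      show Fin.append (σ s) (σ t) (Fin.cast hab.symm (Fin.cast hab (Fin.natAdd a it))) = x
      rw [show Fin.cast hab.symm (Fin.cast hab (Fin.natAdd a it)) = Fin.natAdd a it from rfl,
        Fin.append_right, ht]
    have hne : Fin.cast hab (Fin.castAdd b is) ≠ Fin.cast hab (Fin.natAdd a it) := by
      intro heq
      have hval := congrArg Fin.val heq
      simp only [Fin.coe_cast, Fin.coe_castAdd, Fin.coe_natAdd] at hval
      have := is.isLt
      omega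
    exact hne (hinj (h1.trans h2.symm))
  have := detA π id hninj
  rw [show dtop n (fun j => e n (Fin.append (σ s) (σ t) (Fin.cast hab.symm j)))
    = Matrix.det (Matrix.of fun j k => e n (π j) (id k)) from rfl]
  exact this

lemma append_σ_injective {a b : ℕ} (s : {s : Finset (Fin n) // s.card = a})
    (t : {s : Finset (Fin n) // s.card = b}) (hdisj : Disjoint s.1 t.1) :
    Function.Injective (Fin.append (σ s) (σ t)) := by
  intro x y
  refine Fin.addCases (motive := fun x => Fin.append (σ s) (σ t) x = Fin.append (σ s) (σ t) y
    → x = y) (fun i => ?_) (fun i => ?_) x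
  · refine Fin.addCases (motive := fun y => Fin.append (σ s) (σ t) (Fin.castAdd b i)
      = Fin.append (σ s) (σ t) y → Fin.castAdd b i = y) (fun i' h' => ?_) (fun i' h' => ?_) y
    · rw [Fin.append_left, Fin.append_left] at h'
      exact congrArg (Fin.castAdd b) (σ_injective s h')
    · rw [Fin.append_left, Fin.append_right] at h'
      have hx : σ s i ∈ t.1 := by rw [h']; exact σ_mem t i'
      exact absurd hx (Finset.disjoint_left.mp hdisj (σ_mem s i))
  · refine Fin.addCases (motive := fun y => Fin.append (σ s) (σ t) (Fin.natAdd a i)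
      = Fin.append (σ s) (σ t) y → Fin.natAdd a i = y) (fun i' h' => ?_) (fun i' h' => ?_) y
    · rw [Fin.append_right, Fin.append_left] at h'
      have hx : σ s i' ∈ t.1 := by rw [← h']; exact σ_mem t i
      exact absurd hx (Finset.disjoint_left.mp hdisj (σ_mem s i'))
    · rw [Fin.append_right, Fin.append_right] at h'
      exact congrArg (Fin.natAdd a) (σ_injective t h')

lemma pair_esE_sq {a b : ℕ} (hab : a + b = n) (s : {s : Finset (Fin n) // s.card = a})
    (t : {s : Finset (Fin n) // s.card = b}) (hdisj : Disjoint s.1 t.1) :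
    φtop n (esF s * esF t) * φtop n (esF s * esF t) = 1 := by
  set π : Fin n → Fin n := fun j => Fin.append (σ s) (σ t) (Fin.cast hab.symm j) with hπ
  have hinj : Function.Injective π := by
    intro x y hxy
    have := append_σ_injective s t hdisj hxy
    have hv := congrArg Fin.val this
    simp only [Fin.coe_cast] at hv
    exact Fin.ext hv
  have hval : φtop n (esF s * esF t) = Matrix.det (Matrix.of fun j k => e n (π j) k) := by
    rw [esF_mul, φtop_ιMulti_cast hab]
    rfl
  rw [hval]
  exact detC π hinj

lemma disjoint_eq_compl {a b : ℕ} (hab : a + b = n) (s : {s : Finset (Fin n) // s.card = a})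
    (t : {s : Finset (Fin n) // s.card = b}) (hdisj : Disjoint s.1 t.1) :
    t.1 = s.1ᶜ := by
  apply Finset.eq_of_subset_of_card_le
  · intro x hx
    exact Finset.mem_compl.mpr (fun hxs => Finset.disjoint_left.mp hdisj hxs hx)
  · rw [Finset.card_compl, Fintype.card_fin, t.2, s.2]
    omega



universe u v

lemma finrank_ker_conj {R : Type*} [CommRing R] {M : Type u} {N : Type v}
    [AddCommGroup M] [AddCommGroup N] [Module R M] [Module R N]
    (e : M ≃ₗ[R] N) (g : Module.End R M) (h : Module.End R N)
    (hc : e.toLinearMap ∘ₗ g = h ∘ₗ e.toLinearMap) :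
    Module.finrank R (LinearMap.ker g) = Module.finrank R (LinearMap.ker h) := by
  have h1 : LinearMap.ker g = Submodule.comap e.toLinearMap (LinearMap.ker h) := by
    rw [← LinearMap.ker_comp, ← hc, LinearMap.ker_comp, LinearEquiv.ker, Submodule.comap_bot]
  rw [h1, Submodule.comap_equiv_eq_map_symm]
  exact (Submodule.equivMapOfInjective _ e.symm.injective _).symm.finrank_eq

lemma finrank_ker_toMatrix {R : Type*} [CommRing R] {M : Type u} [AddCommGroup M] [Module R M]
    {ι : Type*} [Fintype ι] [DecidableEq ι] (b : Module.Basis ι R M) (g : Module.End R M) :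
    Module.finrank R (LinearMap.ker g) =
      Module.finrank R (LinearMap.ker ((LinearMap.toMatrix b b g).mulVecLin)) := by
  refine finrank_ker_conj b.equivFun g _ ?_
  ext x
  simp only [LinearMap.comp_apply, LinearEquiv.coe_coe, Module.Basis.equivFun_apply,
    Matrix.mulVecLin_apply]
  rw [LinearMap.toMatrix_mulVec_repr]

lemma finrank_ker_int_rat {ι : Type*} [Fintype ι] (P : Matrix ι ι ℤ) :
    Module.finrank ℤ (LinearMap.ker P.mulVecLin) =
      Module.finrank ℚ (LinearMap.ker (P.map (Int.cast : ℤ → ℚ)).mulVecLin) := by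
  classical
  set castL : (ι → ℤ) →ₗ[ℤ] (ι → ℚ) :=
    LinearMap.pi (fun i => (Algebra.linearMap ℤ ℚ) ∘ₗ LinearMap.proj i) with hcastL
  have castL_apply : ∀ (v : ι → ℤ) (i : ι), castL v i = (v i : ℚ) := fun v i => rfl
  have castL_inj : Function.Injective castL := by
    intro x y hxy
    funext i
    have h := congrFun hxy i
    rw [castL_apply, castL_apply] at h
    exact_mod_cast h
  have hcomm : ∀ (v : ι → ℤ), (P.map (Int.cast : ℤ → ℚ)).mulVec (castL v)
      = castL (P.mulVec v) := by
    intro v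
    funext i
    exact (RingHom.map_mulVec (Int.castRingHom ℚ) P v i).symm
  have hmem : ∀ x : LinearMap.ker P.mulVecLin,
      castL x.1 ∈ LinearMap.ker (P.map (Int.cast : ℤ → ℚ)).mulVecLin := by
    intro x
    have hx : P.mulVec x.1 = 0 := x.2
    rw [LinearMap.mem_ker, Matrix.mulVecLin_apply, hcomm, hx]
    apply map_zero
  set f : LinearMap.ker P.mulVecLin →ₗ[ℤ]
      LinearMap.ker (P.map (Int.cast : ℤ → ℚ)).mulVecLin := {
    toFun := fun x => ⟨castL x.1, hmem x⟩
    map_add' := by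
      intro x y
      apply Subtype.ext
      show castL (x.1 + y.1) = castL x.1 + castL y.1
      exact map_add _ _ _
    map_smul' := by
      intro c x
      apply Subtype.ext
      show castL (c • x.1) = c • (castL x.1)
      exact map_smul _ _ _ } with hf
  have key : ∀ (s : ℤ) (w : LinearMap.ker (P.map (Int.cast : ℤ → ℚ)).mulVecLin),
      ((s : ℚ)) • w = s • w := fun s w => by
    rw [show ((s : ℚ)) = algebraMap ℤ ℚ s from rfl, algebraMap_smul]
  haveI hloc : IsLocalizedModule (nonZeroDivisors ℤ) f := by
    constructor
    · intro s
      rw [Module.End.isUnit_iff]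
      have hs : ((s : ℤ) : ℚ) ≠ 0 := by
        exact_mod_cast nonZeroDivisors.coe_ne_zero s
      constructor
      · intro y z hyz
        simp only [Module.algebraMap_end_apply] at hyz
        rw [← key, ← key] at hyz
        exact smul_right_injective _ hs hyz
      · intro y
        refine ⟨(((s : ℤ) : ℚ))⁻¹ • y, ?_⟩
        rw [Module.algebraMap_end_apply, ← key, smul_smul, mul_inv_cancel₀ hs, one_smul]
    · intro y
      obtain ⟨b, hb⟩ := IsLocalization.exist_integer_multiples (nonZeroDivisors ℤ) (S := ℚ)
        Finset.univ (fun i => y.1 i)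
      choose z hz using fun i => hb i (Finset.mem_univ i)
      have hzval : castL z = ((b : ℤ) : ℚ) • y.1 := by
        funext i
        rw [castL_apply]
        have h := hz i
        rw [Algebra.smul_def] at h
        rw [Pi.smul_apply, smul_eq_mul]
        exact h
      have hzker : z ∈ LinearMap.ker P.mulVecLin := by
        rw [LinearMap.mem_ker, Matrix.mulVecLin_apply]
        apply castL_inj
        rw [← hcomm, hzval, Matrix.mulVec_smul]
        have hy : (P.map (Int.cast : ℤ → ℚ)).mulVec y.1 = 0 := y.2
        rw [hy, smul_zero]
        exact (map_zero _).symm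
      refine ⟨⟨⟨z, hzker⟩, b⟩, ?_⟩
      apply Subtype.ext
      show (b : ℤ) • y.1 = castL z
      rw [hzval, show (((b : ℤ) : ℚ)) = algebraMap ℤ ℚ (b : ℤ) from rfl, algebraMap_smul]
    · intro x y hxy
      refine ⟨1, ?_⟩
      have h1 : castL x.1 = castL y.1 := congrArg Subtype.val hxy
      have h2 := castL_inj h1
      rw [Subtype.ext h2]
  have hrank := IsLocalizedModule.rank_eq (R := ℤ) (nonZeroDivisors ℤ) (le_refl _) f
  show (Module.rank ℤ _).toNat = (Module.rank ℚ _).toNat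
  rw [IsLocalization.rank_eq (R := ℤ) ℚ (nonZeroDivisors ℤ) (le_refl _)
    (N := LinearMap.ker (P.map (Int.cast : ℤ → ℚ)).mulVecLin), hrank]

lemma finrank_ker_rat_rank {ι : Type*} [Fintype ι] [DecidableEq ι] (Q : Matrix ι ι ℚ) :
    Module.finrank ℚ (LinearMap.ker Q.mulVecLin) = Fintype.card ι - Q.rank := by
  have h := LinearMap.finrank_range_add_finrank_ker Q.mulVecLin
  rw [Module.finrank_fintype_fun_eq_card] at h
  have : Q.rank = Module.finrank ℚ (LinearMap.range Q.mulVecLin) := rfl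
  omega

lemma finrank_ker_transpose {ι : Type*} [Fintype ι] [DecidableEq ι] (P : Matrix ι ι ℤ) :
    Module.finrank ℤ (LinearMap.ker Pᵀ.mulVecLin) =
      Module.finrank ℤ (LinearMap.ker P.mulVecLin) := by
  rw [finrank_ker_int_rat, finrank_ker_int_rat P]
  rw [show Pᵀ.map (Int.cast : ℤ → ℚ) = (P.map (Int.cast : ℤ → ℚ))ᵀ from Matrix.transpose_map]
  rw [finrank_ker_rat_rank, finrank_ker_rat_rank, Matrix.rank_transpose]


/-! ### Part 4: extPow lemmas, the pairing matrix, and assembly -/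

lemma extPow_coe {R M : Type*} [CommRing R] [AddCommGroup M] [Module R M]
    (f : M →ₗ[R] M) (q : ℕ) (x : ⋀[R]^q M) :
    ((extPow f q x : ⋀[R]^q M) : ExteriorAlgebra R M) = ExteriorAlgebra.map f (x : ExteriorAlgebra R M) :=
  LinearMap.restrict_coe_apply _ _ _

lemma extPow_comp {R M : Type*} [CommRing R] [AddCommGroup M] [Module R M]
    (f g : M →ₗ[R] M) (q : ℕ) :
    (extPow f q) ∘ₗ (extPow g q) = extPow (f ∘ₗ g) q := by
  refine LinearMap.ext fun x => Subtype.ext ?_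
  show ((extPow f q) ((extPow g q) x) : ExteriorAlgebra R M) = _
  rw [extPow_coe, extPow_coe, extPow_coe]
  exact (DFunLike.congr_fun (ExteriorAlgebra.map_comp_map g f) (x : ExteriorAlgebra R M))

lemma extPow_id {R M : Type*} [CommRing R] [AddCommGroup M] [Module R M] (q : ℕ) :
    extPow (LinearMap.id : M →ₗ[R] M) q = LinearMap.id := by
  refine LinearMap.ext fun x => Subtype.ext ?_
  show ((extPow LinearMap.id q) x : ExteriorAlgebra R M) = _
  rw [extPow_coe, ExteriorAlgebra.map_id]
  rfl

lemma Pair_extPow {B : Matrix (Fin n) (Fin n) ℤ} (hdet : B.det = 1) (a b : ℕ)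
    (x : ⋀[ℤ]^a (Fin n → ℤ)) (y : ⋀[ℤ]^b (Fin n → ℤ)) :
    Pair n a b (extPow (Matrix.toLin' B) a x) (extPow (Matrix.toLin' B) b y)
      = Pair n a b x y := by
  rw [Pair_apply, Pair_apply, extPow_coe, extPow_coe, ← _root_.map_mul, φtop_map, hdet, one_mul]

lemma toMatrix_dualMap {R M : Type*} [CommRing R] [AddCommGroup M] [Module R M]
    {ι : Type*} [Fintype ι] [DecidableEq ι] (b : Module.Basis ι R M) (h : Module.End R M) :
    LinearMap.toMatrix b.dualBasis b.dualBasis (h.dualMap) = (LinearMap.toMatrix b b h)ᵀ := by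
  ext S T
  rw [LinearMap.toMatrix_apply, Module.Basis.dualBasis_repr, Matrix.transpose_apply,
    LinearMap.toMatrix_apply, LinearMap.dualMap_apply]
  rw [show b.dualBasis T (h (b S)) = b.coord T (h (b S)) by rw [Module.Basis.coe_dualBasis]]
  rfl

lemma ker_sub_one_eq {R M : Type*} [CommRing R] [AddCommGroup M] [Module R M]
    (u v : Module.End R M) (huv : u ∘ₗ v = LinearMap.id) (hvu : v ∘ₗ u = LinearMap.id) :
    LinearMap.ker (u - 1) = LinearMap.ker (v - 1) := by
  ext x
  simp only [LinearMap.mem_ker, LinearMap.sub_apply, Module.End.one_apply, sub_eq_zero]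
  constructor
  · intro h
    have h2 := congrArg v h
    rw [show v (u x) = (v ∘ₗ u) x from rfl, hvu, LinearMap.id_apply] at h2
    exact h2.symm
  · intro h
    have h2 := congrArg u h
    rw [show u (v x) = (u ∘ₗ v) x from rfl, huv, LinearMap.id_apply] at h2
    exact h2.symm

section Assembly

variable (hr : True)

/-- complement map on subsets -/
def cmpl {a b : ℕ} (hab : a + b = n) (s : {s : Finset (Fin n) // s.card = a}) :
    {s : Finset (Fin n) // s.card = b} :=
  ⟨s.1ᶜ, by rw [Finset.card_compl, Fintype.card_fin, s.2]; omega⟩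

lemma cmpl_cmpl {a b : ℕ} (hab : a + b = n) (hba : b + a = n)
    (s : {s : Finset (Fin n) // s.card = a}) : cmpl hba (cmpl hab s) = s :=
  Subtype.ext (compl_compl s.1)

lemma pair_entry_zero {a b : ℕ} (hab : a + b = n) (s : {s : Finset (Fin n) // s.card = a})
    (t : {s : Finset (Fin n) // s.card = b}) (hne : t ≠ cmpl hab s) :
    Pair n a b (esE s) (esE t) = 0 := by
  rw [Pair_apply]
  refine pair_esE_zero hab s t ?_
  intro hdisj
  exact hne (Subtype.ext (disjoint_eq_compl hab s t hdisj))

lemma pair_entry_sq {a b : ℕ} (hab : a + b = n) (s : {s : Finset (Fin n) // s.card = a}) :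
    Pair n a b (esE s) (esE (cmpl hab s)) * Pair n a b (esE s) (esE (cmpl hab s)) = 1 := by
  rw [Pair_apply]
  exact pair_esE_sq hab s (cmpl hab s) (disjoint_compl_right)

end Assembly

end ExtAux

open ExtAux

/-- For `A ∈ SL(n, ℤ)` and `0 ≤ r ≤ n`, the rank of the kernel of `∧^r A − id` equals the
rank of the kernel of `∧^{n−r} A − id`, as endomorphisms of `Λ^r ℤ^n` and `Λ^{n−r} ℤ^n`. -/
theorem rank_ker_extPow_sub_id_symm (n : ℕ) (A : Matrix.SpecialLinearGroup (Fin n) ℤ)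
    (r : ℕ) (hr : r ≤ n) :
    Module.finrank ℤ
        (LinearMap.ker (extPow (Matrix.toLin' (A : Matrix (Fin n) (Fin n) ℤ)) r - 1)) =
      Module.finrank ℤ
        (LinearMap.ker
          (extPow (Matrix.toLin' (A : Matrix (Fin n) (Fin n) ℤ)) (n - r) - 1)) := by
  classical
  have hab : r + (n - r) = n := by omega
  have hba : (n - r) + r = n := by omega
  set f := Matrix.toLin' (A : Matrix (Fin n) (Fin n) ℤ) with hf
  set g := Matrix.toLin'
    ((A⁻¹ : Matrix.SpecialLinearGroup (Fin n) ℤ) : Matrix (Fin n) (Fin n) ℤ) with hg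
  have hAmul : (A : Matrix (Fin n) (Fin n) ℤ) *
      ((A⁻¹ : Matrix.SpecialLinearGroup (Fin n) ℤ) : Matrix (Fin n) (Fin n) ℤ) = 1 := by
    rw [← Matrix.SpecialLinearGroup.coe_mul, mul_inv_cancel]
    rfl
  have hAmul' : ((A⁻¹ : Matrix.SpecialLinearGroup (Fin n) ℤ) : Matrix (Fin n) (Fin n) ℤ) *
      (A : Matrix (Fin n) (Fin n) ℤ) = 1 := by
    rw [← Matrix.SpecialLinearGroup.coe_mul, inv_mul_cancel]
    rfl
  have hfg : f ∘ₗ g = LinearMap.id := by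
    rw [hf, hg, ← Matrix.toLin'_mul, hAmul, Matrix.toLin'_one]
  have hgf : g ∘ₗ f = LinearMap.id := by
    rw [hf, hg, ← Matrix.toLin'_mul, hAmul', Matrix.toLin'_one]
  have hBG : ∀ q, (extPow f q) ∘ₗ (extPow g q) = LinearMap.id := fun q => by
    rw [extPow_comp, hfg, extPow_id]
  have hGB : ∀ q, (extPow g q) ∘ₗ (extPow f q) = LinearMap.id := fun q => by
    rw [extPow_comp, hgf, extPow_id]
  set br := bE n r with hbr
  set bnr := bE n (n - r) with hbnr
  set bd := br.dualBasis with hbd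
  set Φ := (Pair n r (n - r)).flip with hΦ
  have hdet : (A : Matrix (Fin n) (Fin n) ℤ).det = 1 := A.2
  have hpair_swap : ∀ (x : ⋀[ℤ]^r (Fin n → ℤ)) (y : ⋀[ℤ]^(n - r) (Fin n → ℤ)),
      Pair n r (n - r) x (extPow f (n - r) y) = Pair n r (n - r) (extPow g r x) y := by
    intro x y
    have hx : extPow f r (extPow g r x) = x := by
      rw [← LinearMap.comp_apply, hBG r, LinearMap.id_apply]
    conv_lhs => rw [← hx]
    exact Pair_extPow hdet r (n - r) (extPow g r x) y
  have hintertwine : Φ ∘ₗ (extPow f (n - r) - 1) = ((extPow g r).dualMap - 1) ∘ₗ Φ := by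
    refine LinearMap.ext fun y => LinearMap.ext fun x => ?_
    simp only [LinearMap.comp_apply, LinearMap.sub_apply, Module.End.one_apply,
      LinearMap.flip_apply, hΦ, LinearMap.dualMap_apply, map_sub]
    rw [hpair_swap x y]
  -- the pairing matrix
  set K : Matrix {s : Finset (Fin n) // s.card = r} {s : Finset (Fin n) // s.card = (n - r)} ℤ :=
    fun S T => Pair n r (n - r) (esE S) (esE T) with hK
  have hKentry_zero : ∀ (S : {s : Finset (Fin n) // s.card = r})
      (T : {s : Finset (Fin n) // s.card = (n - r)}), T ≠ cmpl hab S → K S T = 0 := by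
    intro S T hT
    exact pair_entry_zero hab S T hT
  have hKentry_sq : ∀ (S : {s : Finset (Fin n) // s.card = r}),
      K S (cmpl hab S) * K S (cmpl hab S) = 1 := fun S => pair_entry_sq hab S
  have hK1 : K * Kᵀ = 1 := by
    ext S S'
    rw [Matrix.mul_apply]
    rw [Finset.sum_eq_single (cmpl hab S)]
    · rw [Matrix.transpose_apply]
      by_cases h : S = S'
      · subst h
        rw [hKentry_sq S, Matrix.one_apply_eq]
      · rw [hKentry_zero S' (cmpl hab S) (by
          intro heq
          have h2 := congrArg (cmpl hba) heq
          rw [cmpl_cmpl hab hba, cmpl_cmpl hab hba] at h2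
          exact h h2), mul_zero, Matrix.one_apply_ne h]
    · intro T _ hT
      rw [Matrix.transpose_apply, hKentry_zero S T hT, zero_mul]
    · intro h
      exact absurd (Finset.mem_univ _) h
  have hK2 : Kᵀ * K = 1 := by
    ext T T'
    rw [Matrix.mul_apply]
    rw [Finset.sum_eq_single (cmpl hba T)]
    · rw [Matrix.transpose_apply]
      have hTc : cmpl hab (cmpl hba T) = T := cmpl_cmpl hba hab T
      by_cases h : T = T'
      · subst h
        have hsq := hKentry_sq (cmpl hba T)
        rw [hTc] at hsq
        rw [hsq]
        exact (Matrix.one_apply_eq T).symm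
      · rw [hKentry_zero (cmpl hba T) T' (by rw [hTc]; exact fun heq => h heq.symm),
          mul_zero, Matrix.one_apply_ne h]
    · intro S _ hS
      rw [Matrix.transpose_apply, hKentry_zero S T (by
        intro heq
        refine hS ?_
        have h2 := congrArg (cmpl hba) heq
        rw [cmpl_cmpl hab hba] at h2
        exact h2.symm), zero_mul]
    · intro h
      exact absurd (Finset.mem_univ _) h
  have hKmat : LinearMap.toMatrix bnr bd Φ = K := by
    ext S T
    rw [LinearMap.toMatrix_apply, hbd, Module.Basis.dualBasis_repr]
    rw [hΦ, LinearMap.flip_apply, hbr, hbnr, bE_apply, bE_apply]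
  have h1 : Φ ∘ₗ Matrix.toLin bd bnr Kᵀ = LinearMap.id := by
    conv_lhs => rw [← Matrix.toLin_toMatrix bnr bd Φ, hKmat]
    rw [show (Matrix.toLin bnr bd K) ∘ₗ (Matrix.toLin bd bnr Kᵀ)
        = Matrix.toLin bd bd (K * Kᵀ) from (Matrix.toLin_mul bd bnr bd K Kᵀ).symm,
      hK1, Matrix.toLin_one]
  have h2 : Matrix.toLin bd bnr Kᵀ ∘ₗ Φ = LinearMap.id := by
    conv_lhs => rw [← Matrix.toLin_toMatrix bnr bd Φ, hKmat]
    rw [show (Matrix.toLin bd bnr Kᵀ) ∘ₗ (Matrix.toLin bnr bd K)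
        = Matrix.toLin bnr bnr (Kᵀ * K) from (Matrix.toLin_mul bnr bd bnr Kᵀ K).symm,
      hK2, Matrix.toLin_one]
  set Φeq : (⋀[ℤ]^(n - r) (Fin n → ℤ) : Submodule ℤ _) ≃ₗ[ℤ]
      Module.Dual ℤ (⋀[ℤ]^r (Fin n → ℤ) : Submodule ℤ _) :=
    LinearEquiv.ofLinear Φ (Matrix.toLin bd bnr Kᵀ) h1 h2 with hΦeq
  have stepA : Module.finrank ℤ (LinearMap.ker (extPow f (n - r) - 1))
      = Module.finrank ℤ (LinearMap.ker ((extPow g r).dualMap - 1)) :=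
    finrank_ker_conj Φeq _ _ hintertwine
  have stepB : (extPow g r).dualMap - 1 = (extPow g r - 1).dualMap := by
    refine LinearMap.ext fun l => LinearMap.ext fun x => ?_
    simp only [LinearMap.sub_apply, Module.End.one_apply, LinearMap.dualMap_apply, map_sub]
  have stepC : Module.finrank ℤ (LinearMap.ker ((extPow g r - 1).dualMap))
      = Module.finrank ℤ (LinearMap.ker (extPow g r - 1)) := by
    rw [finrank_ker_toMatrix bd ((extPow g r - 1).dualMap), hbd,
      toMatrix_dualMap br (extPow g r - 1), finrank_ker_transpose,
      ← finrank_ker_toMatrix br (extPow g r - 1)]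
  have stepD : LinearMap.ker (extPow g r - 1) = LinearMap.ker (extPow f r - 1) :=
    ker_sub_one_eq (extPow g r) (extPow f r) (hGB r) (hBG r)
  rw [show extPow f r - 1 = extPow g r - 1 - (extPow g r - extPow f r) by abel] at stepD ⊢
  rw [show extPow g r - 1 - (extPow g r - extPow f r) = extPow f r - 1 by abel] at stepD ⊢
  calc Module.finrank ℤ (LinearMap.ker (extPow f r - 1))
      = Module.finrank ℤ (LinearMap.ker (extPow g r - 1)) := by rw [stepD]
    _ = Module.finrank ℤ (LinearMap.ker ((extPow g r - 1).dualMap)) := stepC.symm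
    _ = Module.finrank ℤ (LinearMap.ker ((extPow g r).dualMap - 1)) := by rw [stepB]
    _ = Module.finrank ℤ (LinearMap.ker (extPow f (n - r) - 1)) := stepA.symm
end

section
/- For all natural numbers n, r, k and all s with 0 ≤ s ≤ r, one has P(n+1, r, k+s) ≥ P(n, r, k), where P(n,r,k) is the number of partitions of k into r distinct positive integers each at most n. -/
open Finset

/-- `Ppart n r k` is the number of sets of `r` distinct positive integers, each at most
`n`, summing to `k`. -/
def Ppart (n r k : ℕ) : ℕ :=
  ((Finset.powersetCard r (Finset.Icc 1 n)).filter fun S => S.sum id = k).card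

namespace PpartAux

/-- The number of elements of `S` strictly greater than `x`. -/
def cnt (S : Finset ℕ) (x : ℕ) : ℕ := (S.filter fun y => x < y).card

lemma cnt_lt_of_lt {S : Finset ℕ} {x y : ℕ} (hy : y ∈ S) (hxy : x < y) :
    cnt S y < cnt S x := by
  have h : insert y (S.filter fun z => y < z) ⊆ S.filter fun z => x < z := by
    intro z hz
    simp only [Finset.mem_insert, Finset.mem_filter] at *
    rcases hz with rfl | ⟨hz1, hz2⟩
    · exact ⟨hy, hxy⟩
    · exact ⟨hz1, hxy.trans hz2⟩
  have h2 := Finset.card_le_card h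
  rwa [Finset.card_insert_of_notMem (by simp)] at h2

lemma cnt_injOn (S : Finset ℕ) : Set.InjOn (cnt S) S := by
  intro a ha b hb hab
  by_contra hne
  rcases lt_or_gt_of_ne hne with h | h
  · exact absurd hab (cnt_lt_of_lt hb h).ne'
  · exact absurd hab (cnt_lt_of_lt ha h).ne

/-- Add one to `x` if it is among the `s` largest elements of `S`. -/
def bump (s : ℕ) (S : Finset ℕ) (x : ℕ) : ℕ := if cnt S x < s then x + 1 else x

lemma bump_lt (s : ℕ) {S : Finset ℕ} {x y : ℕ} (hy : y ∈ S) (hxy : x < y) :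
    bump s S x < bump s S y := by
  unfold bump
  by_cases hx : cnt S x < s
  · rw [if_pos hx, if_pos ((cnt_lt_of_lt hy hxy).trans hx)]; omega
  · rw [if_neg hx]; split <;> omega

lemma bump_injOn (s : ℕ) (S : Finset ℕ) : Set.InjOn (bump s S) S := by
  intro a ha b hb hab
  by_contra hne
  rcases lt_or_gt_of_ne hne with h | h
  · exact absurd hab (bump_lt s hb h).ne
  · exact absurd hab (bump_lt s ha h).ne'

lemma image_cnt (S : Finset ℕ) : S.image (cnt S) = Finset.range S.card := by
  apply Finset.eq_of_subset_of_card_le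
  · intro m hm
    simp only [Finset.mem_image] at hm
    obtain ⟨x, hx, rfl⟩ := hm
    rw [Finset.mem_range]
    calc cnt S x ≤ (S.erase x).card := Finset.card_le_card (fun z hz => by
          simp only [Finset.mem_filter] at hz
          exact Finset.mem_erase.2 ⟨by omega, hz.1⟩)
      _ < S.card := Finset.card_erase_lt_of_mem hx
  · rw [Finset.card_range, Finset.card_image_of_injOn (cnt_injOn S)]

lemma card_bumped (S : Finset ℕ) (s : ℕ) :
    (S.filter fun x => cnt S x < s).card = min s S.card := by
  rw [← Finset.card_image_of_injOn ((cnt_injOn S).mono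
    (by exact_mod_cast Finset.filter_subset _ _))]
  rw [← Finset.filter_image (p := fun m => m < s), image_cnt]
  have : (Finset.range S.card).filter (fun m => m < s) = Finset.range (min s S.card) := by
    ext m; simp only [Finset.mem_filter, Finset.mem_range]; omega
  rw [this, Finset.card_range]

lemma filter_image_bump (s : ℕ) (S : Finset ℕ) {x : ℕ} (hx : x ∈ S) :
    cnt (S.image (bump s S)) (bump s S x) = cnt S x := by
  unfold cnt
  have h1 : (S.image (bump s S)).filter (fun z => bump s S x < z)
      = (S.filter fun y => bump s S x < bump s S y).image (bump s S) := by
    ext z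
    simp only [Finset.mem_filter, Finset.mem_image]
    constructor
    · rintro ⟨⟨y, hy, rfl⟩, hz⟩; exact ⟨y, ⟨hy, hz⟩, rfl⟩
    · rintro ⟨y, ⟨hy, hz⟩, rfl⟩; exact ⟨⟨y, hy, rfl⟩, hz⟩
  rw [h1, Finset.card_image_of_injOn ((bump_injOn s S).mono
    (by exact_mod_cast Finset.filter_subset _ _))]
  congr 1
  apply Finset.filter_congr
  intro y hy
  constructor
  · intro h
    by_contra hcon
    push_neg at hcon
    rcases eq_or_lt_of_le hcon with rfl | hlt
    · exact absurd h (lt_irrefl _)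
    · exact absurd (bump_lt s hx hlt) (by omega)
  · exact fun h => bump_lt s hy h

lemma unbump (s : ℕ) (S : Finset ℕ) :
    (S.image (bump s S)).image
      (fun y => if cnt (S.image (bump s S)) y < s then y - 1 else y) = S := by
  rw [Finset.image_image]
  apply Finset.image_congr (g := id) ?_ |>.trans (Finset.image_id)
  intro x hx
  simp only [Function.comp_apply, id_eq]
  rw [filter_image_bump s S hx]
  unfold bump
  by_cases h : cnt S x < s
  · simp [h]
  · simp [h]

end PpartAux

open PpartAux in
/-- For all natural numbers `n, r, k` and all `s` with `0 ≤ s ≤ r`,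
`P(n+1, r, k+s) ≥ P(n, r, k)`. -/
theorem Ppart_succ_ge (n r k s : ℕ) (hs : s ≤ r) :
    Ppart n r k ≤ Ppart (n + 1) r (k + s) := by
  classical
  apply Finset.card_le_card_of_injOn (fun S => S.image (bump s S))
  · intro S hS
    simp only [Finset.mem_coe, Finset.mem_filter, Finset.mem_powersetCard] at hS ⊢
    obtain ⟨⟨hsub, hcard⟩, hsum⟩ := hS
    refine ⟨⟨?_, ?_⟩, ?_⟩
    · intro z hz
      simp only [Finset.mem_image] at hz
      obtain ⟨x, hx, rfl⟩ := hz
      have := hsub hx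
      simp only [Finset.mem_Icc] at this ⊢
      unfold bump; split <;> omega
    · rw [Finset.card_image_of_injOn (bump_injOn s S), hcard]
    · rw [Finset.sum_image (fun x hx y hy h => bump_injOn s S hx hy h)]
      have : ∀ x ∈ S, id (bump s S x) = x + (if cnt S x < s then 1 else 0) := by
        intro x hx; unfold bump; split <;> simp
      have h1 : ∑ x ∈ S, x = k := by simpa using hsum
      rw [Finset.sum_congr rfl this, Finset.sum_add_distrib, h1,
        ← Finset.card_filter, card_bumped, hcard]
      omega
  · intro S hS S' hS' heq
    have h := congrArg (fun T => T.image
      (fun y => if cnt T y < s then y - 1 else y)) heq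
    simpa only [unbump] using h
end

section
/- Let S_n be the n×n upper triangular integer matrix with 1's on the diagonal and 1's on the superdiagonal (S_n e_i = e_{i−1} + e_i with e_0 = 0). Define a_{n,r} as the rank of the kernel of ∧^r S_n − I acting on Λ^r ℤ^n, and a_n = Σ_{r=0}^{n} a_{n,r}. Then a_n is strictly increasing in n: a_{n+1} > a_n for all n ≥ 1. -/
/-- `a_{n,r} = P(n, r, ⌊r(n+1)/2⌋)`, the rank of the kernel of `∧^r S_n − I` on
`Λ^r ℤ^n`, taking the partition formula as the definition. -/
def aRank (n r : ℕ) : ℕ := Ppart n r (r * (n + 1) / 2)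

/-- `a_n = ∑_{r=0}^{n} a_{n,r}`, the common rank of the `K`-groups of `𝒜_{n,θ}`. -/
def a (n : ℕ) : ℕ := ∑ r ∈ Finset.range (n + 1), aRank n r


namespace AStrictAux

/-- rank of `x` in `S`: number of elements of `S` that are `≥ x`. -/
def rk (S : Finset ℕ) (x : ℕ) : ℕ := (S.filter fun y => x ≤ y).card

/-- bump the top `d` elements of `S` by one. -/
def bump (S : Finset ℕ) (d x : ℕ) : ℕ := if rk S x ≤ d then x + 1 else x

lemma rk_lt {S : Finset ℕ} {x y : ℕ} (hx : x ∈ S) (hxy : x < y) :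
    rk S y < rk S x := by
  apply Finset.card_lt_card
  rw [Finset.ssubset_def]
  constructor
  · intro z hz
    rw [Finset.mem_filter] at hz ⊢
    exact ⟨hz.1, by omega⟩
  · intro hsub
    have h := hsub (Finset.mem_filter.2 ⟨hx, le_refl x⟩)
    rw [Finset.mem_filter] at h
    omega

lemma rk_pos {S : Finset ℕ} {x : ℕ} (hx : x ∈ S) : 1 ≤ rk S x :=
  Finset.card_pos.2 ⟨x, Finset.mem_filter.2 ⟨hx, le_refl x⟩⟩

lemma rk_le_card (S : Finset ℕ) (x : ℕ) : rk S x ≤ S.card := Finset.card_filter_le _ _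

lemma bump_lt_bump {S : Finset ℕ} {d x y : ℕ} (hx : x ∈ S) (hxy : x < y) :
    bump S d x < bump S d y := by
  have hr := rk_lt (S := S) hx hxy
  unfold bump
  split_ifs with h1 h2 <;> omega

lemma bump_le_bump_iff {S : Finset ℕ} {d x y : ℕ} (hx : x ∈ S) (hy : y ∈ S) :
    bump S d x ≤ bump S d y ↔ x ≤ y := by
  constructor
  · intro h
    by_contra hc
    exact absurd (bump_lt_bump (d := d) hy (by omega : y < x)) (by omega)
  · intro h
    rcases eq_or_lt_of_le h with rfl | h
    · exact le_refl _
    · exact le_of_lt (bump_lt_bump hx h)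

lemma bump_injOn (S : Finset ℕ) (d : ℕ) : Set.InjOn (bump S d) S := by
  intro x hx y hy h
  have h1 := (bump_le_bump_iff (d := d) hx hy).1 (le_of_eq h)
  have h2 := (bump_le_bump_iff (d := d) hy hx).1 (le_of_eq h.symm)
  omega

lemma rk_injOn (S : Finset ℕ) : Set.InjOn (rk S) S := by
  intro x hx y hy h
  by_contra hc
  rcases Nat.lt_or_ge x y with h1 | h1
  · exact absurd (rk_lt hx h1) (by omega)
  · exact absurd (rk_lt hy (by omega : y < x)) (by omega)

lemma image_rk (S : Finset ℕ) : S.image (rk S) = Finset.Icc 1 S.card := by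
  apply Finset.eq_of_subset_of_card_le
  · intro m hm
    obtain ⟨x, hx, rfl⟩ := Finset.mem_image.1 hm
    exact Finset.mem_Icc.2 ⟨rk_pos hx, rk_le_card S x⟩
  · rw [Nat.card_Icc, Finset.card_image_of_injOn (rk_injOn S)]
    omega

/-- exactly `d` elements get bumped when `d ≤ |S|`. -/
lemma card_bumped {S : Finset ℕ} {d : ℕ} (hd : d ≤ S.card) :
    (S.filter fun x => rk S x ≤ d).card = d := by
  have h1 : ((S.filter fun x => rk S x ≤ d).image (rk S)).card
      = (S.filter fun x => rk S x ≤ d).card :=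
    Finset.card_image_of_injOn ((rk_injOn S).mono (by
      intro x hx; exact (Finset.mem_filter.1 hx).1))
  rw [← h1]
  have h2 : (S.filter fun x => rk S x ≤ d).image (rk S)
      = (S.image (rk S)).filter (fun m => m ≤ d) := by
    ext m
    simp only [Finset.mem_image, Finset.mem_filter]
    constructor
    · rintro ⟨x, ⟨hx, hle⟩, rfl⟩; exact ⟨⟨x, hx, rfl⟩, hle⟩
    · rintro ⟨⟨x, hx, rfl⟩, hle⟩; exact ⟨x, ⟨hx, hle⟩, rfl⟩
  rw [h2, image_rk]
  have h3 : (Finset.Icc 1 S.card).filter (fun m => m ≤ d) = Finset.Icc 1 d := by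
    ext m
    simp only [Finset.mem_filter, Finset.mem_Icc]
    omega
  rw [h3, Nat.card_Icc]
  omega

lemma sum_bump {S : Finset ℕ} {d : ℕ} (hd : d ≤ S.card) :
    ((S.image (bump S d)).sum id) = S.sum id + d := by
  rw [Finset.sum_image (fun x hx y hy h => bump_injOn S d hx hy h)]
  have : ∀ x ∈ S, bump S d x = x + (if rk S x ≤ d then 1 else 0) := by
    intro x _; unfold bump; split <;> omega
  simp only [id_eq]
  rw [Finset.sum_congr rfl this, Finset.sum_add_distrib]
  rw [← Finset.card_filter, card_bumped hd]

lemma rk_image_bump {S : Finset ℕ} {d x : ℕ} (hx : x ∈ S) :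
    rk (S.image (bump S d)) (bump S d x) = rk S x := by
  unfold rk
  have h : (S.image (bump S d)).filter (fun t => bump S d x ≤ t)
      = (S.filter fun y => x ≤ y).image (bump S d) := by
    ext t
    simp only [Finset.mem_filter, Finset.mem_image]
    constructor
    · rintro ⟨⟨y, hy, rfl⟩, hle⟩
      exact ⟨y, ⟨hy, (bump_le_bump_iff hx hy).1 hle⟩, rfl⟩
    · rintro ⟨y, ⟨hy, hxy⟩, rfl⟩
      exact ⟨⟨y, hy, rfl⟩, (bump_le_bump_iff hx hy).2 hxy⟩
  rw [h, Finset.card_image_of_injOn ((bump_injOn S d).mono (by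
    intro z hz; exact (Finset.mem_filter.1 hz).1))]

/-- the bump map has an explicit left inverse, hence it is injective. -/
lemma unbump_bump (S : Finset ℕ) (d : ℕ) :
    (S.image (bump S d)).image
      (fun t => if rk (S.image (bump S d)) t ≤ d then t - 1 else t) = S := by
  rw [Finset.image_image]
  have : ∀ x ∈ S,
      ((fun t => if rk (S.image (bump S d)) t ≤ d then t - 1 else t) ∘ bump S d) x = x := by
    intro x hx
    simp only [Function.comp]
    rw [rk_image_bump hx]
    unfold bump
    by_cases h : rk S x ≤ d <;> simp [h]
  rw [Finset.image_congr this, Finset.image_id']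

lemma Ppart_le (n r k d : ℕ) (hd : d ≤ r) : Ppart n r k ≤ Ppart (n + 1) r (k + d) := by
  classical
  apply Finset.card_le_card_of_injOn (fun S => S.image (bump S d))
  · intro S hS
    simp only [Finset.mem_coe, Finset.mem_filter, Finset.mem_powersetCard] at hS ⊢
    obtain ⟨⟨hsub, hcard⟩, hsum⟩ := hS
    refine ⟨⟨?_, ?_⟩, ?_⟩
    · intro t ht
      obtain ⟨x, hx, rfl⟩ := Finset.mem_image.1 ht
      have := Finset.mem_Icc.1 (hsub hx)
      unfold bump
      split <;> (apply Finset.mem_Icc.2; omega)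
    · rw [Finset.card_image_of_injOn (bump_injOn S d), hcard]
    · rw [sum_bump (by omega), hsum]
  · intro S₁ _ S₂ _ heq
    have h1 := unbump_bump S₁ d
    have h2 := unbump_bump S₂ d
    simp only at heq
    rw [heq, h2] at h1
    exact h1.symm

lemma aRank_le (n r : ℕ) : aRank n r ≤ aRank (n + 1) r := by
  unfold aRank
  have h1 : r * (n + 1) / 2 ≤ r * (n + 2) / 2 :=
    Nat.div_le_div_right (Nat.mul_le_mul_left r (by omega))
  have h2 : r * (n + 2) / 2 ≤ r * (n + 1) / 2 + r := by
    calc r * (n + 2) / 2 ≤ (r * (n + 1) + 2 * r) / 2 :=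
          Nat.div_le_div_right (by ring_nf; omega)
      _ = r * (n + 1) / 2 + r := by
          rw [Nat.add_mul_div_left _ _ (by norm_num : 0 < 2)]
  have key := Ppart_le n r (r * (n + 1) / 2) (r * (n + 2) / 2 - r * (n + 1) / 2) (by omega)
  have h3 : r * (n + 1) / 2 + (r * (n + 2) / 2 - r * (n + 1) / 2) = r * (n + 2) / 2 := by omega
  rw [h3] at key
  have h4 : r * (n + 1 + 1) = r * (n + 2) := by ring
  rw [h4]
  exact key

lemma aRank_top (m : ℕ) : 1 ≤ aRank m m := by
  unfold aRank Ppart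
  apply Finset.card_pos.2
  refine ⟨Finset.Icc 1 m, Finset.mem_filter.2 ⟨Finset.mem_powersetCard.2
    ⟨Finset.Subset.refl _, by simp [Nat.card_Icc]⟩, ?_⟩⟩
  have h : Finset.Icc 1 m = (Finset.range (m + 1)).erase 0 := by
    ext x; simp [Finset.mem_Icc, Finset.mem_range, Finset.mem_erase]; omega
  have hsum : (Finset.Icc 1 m).sum id = ∑ i ∈ Finset.range (m + 1), i := by
    rw [h]
    rw [Finset.sum_erase _ (by simp)]
    simp [id]
  rw [hsum, Finset.sum_range_id]
  congr 1
  rw [Nat.add_sub_cancel, Nat.mul_comm]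

end AStrictAux

/-- The sequence `a_n` is strictly increasing: `a_{n+1} > a_n` for all `n ≥ 1`. -/
theorem a_strictly_increasing (n : ℕ) (hn : 1 ≤ n) : a n < a (n + 1) := by
  have h1 : a n ≤ ∑ r ∈ Finset.range (n + 1), aRank (n + 1) r :=
    Finset.sum_le_sum fun r _ => AStrictAux.aRank_le n r
  have h2 : a (n + 1) = (∑ r ∈ Finset.range (n + 1), aRank (n + 1) r) + aRank (n + 1) (n + 1) := by
    unfold a
    rw [Finset.sum_range_succ]
  have h3 := AStrictAux.aRank_top (n + 1)
  omega
end
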